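/- Let a, b ∈ ℝ^f and set u = E·a, v = E·b. Then: (i) if u > v (componentwise ≥ with u ≠ v) then a ≫ b (strict in every component); in particular, if u > 0 then a ≫ 0. (ii) If 0 < u < (p−1)·𝟙 componentwise (where 𝟙 is the all-ones vector), then 0 ≪ a ≪ 𝟙. -/

import Mathlib

open Polynomial

/-- The power sum `S_d(-k) = ∑_{a monic, deg a = d} a^k`, written as a sum over the
lower-order coefficients of the monic polynomial. -/
noncomputable def powerSum (Fq : Type) [Field Fq] [Fintype Fq] (d k : ℕ) : Polynomial Fq :=
  ∑ c : Fin d → Fq, (X ^ d + ∑ i : Fin d, C (c i) * X ^ (i : ℕ)) ^ k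

/-- `m` sums to `k` with no carrying of digits in base `p`. -/
def NoCarry (p : ℕ) {n : ℕ} (m : Fin n → ℕ) (k : ℕ) : Prop :=
  (∑ i, m i) = k ∧ ∀ j : ℕ, (∑ i, m i / p ^ j % p) = k / p ^ j % p

/-- The set `U_d(k)`. -/
def Uset (p q d k : ℕ) : Set (Fin (d + 1) → ℕ) :=
  {m | NoCarry p m k ∧ ∀ i : Fin (d + 1), 0 < (i : ℕ) → 0 < m i ∧ (q - 1) ∣ m i}

/-- The weight of an element of `U_d(k)`. -/
def wtU {d : ℕ} (m : Fin (d + 1) → ℕ) : ℕ :=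
  ∑ i : Fin (d + 1), (d - (i : ℕ)) * m i

/-- Strict lexicographic order on tuples. -/
def LexLT {n : ℕ} (x y : Fin n → ℕ) : Prop :=
  ∃ i, (∀ j, j < i → x j = y j) ∧ x i < y i

/-- Lexicographic order on tuples. -/
def LexLE {n : ℕ} (x y : Fin n → ℕ) : Prop := x = y ∨ LexLT x y

/-- `L_k := min_{0 ≤ i < f} l(k p^i)/(q-1)` where `l` is the base-`q` digit sum, `q = p^f`. -/
noncomputable def Lval (p f k : ℕ) (hf : 0 < f) : ℚ :=
  (Finset.range f).inf' ⟨0, Finset.mem_range.mpr hf⟩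
    (fun i => ((Nat.digits (p ^ f) (k * p ^ i)).sum : ℚ) / ((p : ℚ) ^ f - 1))

/-- The set `W_d(N)` of compositions. -/
def Wset (p q d N : ℕ) : Set (Fin d → ℕ) :=
  {Y | NoCarry p Y N ∧ ∀ i : Fin d, (i : ℕ) + 1 < d → 0 < Y i ∧ (q - 1) ∣ Y i}

/-- The weight of a composition. -/
def wtW {d : ℕ} (Y : Fin d → ℕ) : ℕ := ∑ i : Fin d, ((i : ℕ) + 1) * Y i

/-- `X` is the modest (lexicographically largest) composition in `W_d(N)`. -/
def Modest (p q : ℕ) {d : ℕ} (N : ℕ) (X : Fin d → ℕ) : Prop :=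
  X ∈ Wset p q d N ∧ ∀ Y ∈ Wset p q d N, LexLE Y X

/-- `X` is an optimal (minimum weight) composition in `W_d(N)`. -/
def Optimal (p q : ℕ) {d : ℕ} (N : ℕ) (X : Fin d → ℕ) : Prop :=
  X ∈ Wset p q d N ∧ ∀ Y ∈ Wset p q d N, wtW X ≤ wtW Y

/-- `Γ(n) : Fin f → ℕ`, summing the base-`p` digits of `n` in each residue class mod `f`. -/
def Gamma (p f n : ℕ) : Fin f → ℕ :=
  fun i => ∑ j ∈ Finset.range (Nat.log p n + 1), if j % f = (i : ℕ) then n / p ^ j % p else 0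

/-- The cyclic matrix `E`, as a map: `(E x)_i = p x_{i+1} - x_i`, indices mod `f`. -/
def Emap (p : ℕ) {R : Type} [Ring R] {f : ℕ} (x : Fin f → R) : Fin f → R :=
  fun i => (p : R) * x ⟨((i : ℕ) + 1) % f, Nat.mod_lt _ i.pos⟩ - x i

/-- `𝔍 = {Γ(n) : n > 0 is q-even}`, where `q = p ^ f`. -/
def Jfrak (p f : ℕ) : Set (Fin f → ℕ) :=
  {w | ∃ n : ℕ, 0 < n ∧ (p ^ f - 1) ∣ n ∧ Gamma p f n = w}

/-- `I_d`. -/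
def Iset (p f d : ℕ) : Set (Fin f → ℕ) :=
  {u | (∃ n : ℕ, 0 < n ∧ Gamma p f n = u) ∧
    ∃ v : Fin (d - 1) → Fin f → ℕ, (∀ j, v j ∈ Jfrak p f) ∧ (∑ j, v j) < u}

/-- `J_d`. -/
def Jset (p f d : ℕ) : Set (Fin f → ℕ) :=
  if d = 0 then ∅ else Jfrak p f ∩ (Iset p f d \ Iset p f (d + 1))

/-- A composition is `τ`-monotonic. -/
def TauMonotonic (p f : ℕ) {d : ℕ} (X : Fin d → ℕ) : Prop :=
  ∀ i j : Fin d, i < j → ∀ m n : ℕ, X i / p ^ m % p ≠ 0 → X j / p ^ n % p ≠ 0 →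
    m % f = n % f → n ≤ m

/-- `W_d^B(N)`: compositions in `W_d(N)` whose `Γ`-matrix is `B`. -/
def WBset (p f d N : ℕ) (B : Fin d → Fin f → ℕ) : Set (Fin d → ℕ) :=
  {Y | Y ∈ Wset p (p ^ f) d N ∧ ∀ j, Gamma p f (Y j) = B j}

/-- The multizeta value `ζ(-k_1, …, -k_r)` as a (finite) sum over strictly
decreasing tuples of degrees. -/
noncomputable def multizeta (Fq : Type) [Field Fq] [Fintype Fq] {r : ℕ} (k : Fin r → ℕ) :
    Polynomial Fq :=
  ∑ᶠ (dt : Fin r → ℕ) (_ : StrictAnti dt), ∏ i, powerSum Fq (dt i) (k i)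

lemma emap_key (p : ℕ) {f : ℕ} (hp : 2 ≤ p) (hf : 0 < f) (c : Fin f → ℝ)
    (hle : ∀ i : Fin f, c i ≤ (p : ℝ) * c ⟨((i : ℕ) + 1) % f, Nat.mod_lt _ hf⟩)
    (i0 : Fin f) (hs : c i0 < (p : ℝ) * c ⟨((i0 : ℕ) + 1) % f, Nat.mod_lt _ hf⟩) :
    ∀ i, 0 < c i := by
  have hp0 : (0 : ℝ) < (p : ℝ) := by
    have : 0 < p := by omega
    exact_mod_cast this
  intro i
  set g : ℕ → ℝ := fun k => (p : ℝ) ^ k * c ⟨((i : ℕ) + k) % f, Nat.mod_lt _ hf⟩ with hg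
  have hidx : ∀ k : ℕ, ((((i : ℕ) + k) % f) + 1) % f = ((i : ℕ) + (k + 1)) % f := by
    intro k
    rw [Nat.mod_add_mod]
    ring_nf
  have hstep : ∀ k, g k ≤ g (k + 1) := by
    intro k
    have h := hle ⟨((i : ℕ) + k) % f, Nat.mod_lt _ hf⟩
    have he : (⟨((((i : ℕ) + k) % f) + 1) % f, Nat.mod_lt _ hf⟩ : Fin f)
        = ⟨((i : ℕ) + (k + 1)) % f, Nat.mod_lt _ hf⟩ := Fin.ext (hidx k)
    rw [he] at h
    simp only [hg]
    have hh := mul_le_mul_of_nonneg_left h (le_of_lt (pow_pos hp0 k))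
    rw [pow_succ]
    nlinarith [hh]
  have hmono : Monotone g := monotone_nat_of_le_succ hstep
  -- the strict step
  set k0 : ℕ := ((i0 : ℕ) + f - (i : ℕ)) % f with hk0
  have hk0f : k0 < f := Nat.mod_lt _ hf
  have h1 : ((i : ℕ) + k0) % f = (i0 : ℕ) := by
    rw [hk0, Nat.add_mod_mod]
    have hie : (i : ℕ) + ((i0 : ℕ) + f - (i : ℕ)) = (i0 : ℕ) + f := by
      have := i.isLt
      omega
    rw [hie, Nat.add_mod_right, Nat.mod_eq_of_lt i0.isLt]
  have hstrict : g k0 < g (k0 + 1) := by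
    have he1 : (⟨((i : ℕ) + k0) % f, Nat.mod_lt _ hf⟩ : Fin f) = i0 := Fin.ext h1
    have he2 : (⟨((i : ℕ) + (k0 + 1)) % f, Nat.mod_lt _ hf⟩ : Fin f)
        = ⟨((i0 : ℕ) + 1) % f, Nat.mod_lt _ hf⟩ := by
      apply Fin.ext
      simp only
      rw [← hidx k0, h1]
    simp only [hg, he1, he2]
    have hh := mul_lt_mul_of_pos_left hs (pow_pos hp0 k0)
    rw [pow_succ]
    nlinarith [hh]
  have hmain : g 0 < g f := by
    calc g 0 ≤ g k0 := hmono (Nat.zero_le _)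
    _ < g (k0 + 1) := hstrict
    _ ≤ g f := hmono (by omega)
  have hg0 : g 0 = c i := by
    simp only [hg, pow_zero, one_mul, Nat.add_zero]
    congr 1
    exact Fin.ext (Nat.mod_eq_of_lt i.isLt)
  have hgf : g f = (p : ℝ) ^ f * c i := by
    have hidx2 : (⟨((i : ℕ) + f) % f, Nat.mod_lt _ hf⟩ : Fin f) = i := by
      apply Fin.ext
      show ((i : ℕ) + f) % f = (i : ℕ)
      rw [Nat.add_mod_right]
      exact Nat.mod_eq_of_lt i.isLt
    simp only [hg, hidx2]
  rw [hg0, hgf] at hmain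
  have hpf : (1 : ℝ) < (p : ℝ) ^ f := by
    apply one_lt_pow₀
    · exact_mod_cast by omega
    · omega
  nlinarith

/-- positivity properties of `E⁻¹`. -/
theorem Emap_inverse_positivity
    (p f : ℕ) (hp : p.Prime) (hf : 0 < f) (a b : Fin f → ℝ) :
    (Emap p b < Emap p a → ∀ i, b i < a i) ∧
    (0 < Emap p a → ∀ i, 0 < a i) ∧
    ((0 < Emap p a ∧ Emap p a < fun _ => (p : ℝ) - 1) → ∀ i, 0 < a i ∧ a i < 1) := by
  have hp2 : 2 ≤ p := hp.two_le
  have main : ∀ x y : Fin f → ℝ, Emap p y < Emap p x → ∀ i, y i < x i := by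
    intro x y hxy i
    rw [Pi.lt_def] at hxy
    obtain ⟨hle, i0, hlt⟩ := hxy
    have hkey := emap_key p hp2 hf (fun j => x j - y j) ?_ i0 ?_ i
    · simpa using hkey
    · intro j
      have h := hle j
      simp only [Emap] at h
      linarith
    · simp only [Emap] at hlt
      linarith
  have hzero : Emap p (0 : Fin f → ℝ) = 0 := by
    funext j
    simp [Emap]
  have hone : Emap p (fun _ : Fin f => (1 : ℝ)) = fun _ => (p : ℝ) - 1 := by
    funext j
    simp [Emap]
  refine ⟨main a b, ?_, ?_⟩
  · intro h i
    have := main a 0 (by rwa [hzero]) i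
    simpa using this
  · rintro ⟨h1, h2⟩ i
    constructor
    · have := main a 0 (by rwa [hzero]) i
      simpa using this
    · have := main (fun _ : Fin f => (1 : ℝ)) a (by rwa [← hone] at h2) i
      simpa using this
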